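/- Let a,b,c be positive integers, A,B,C units in a ring R = ℤ[S⁻¹] (S a finite set of primes, R a PID with trivial Picard group). If (s,t) ∈ R² with sR + tR = R, sR is an a-th power of an ideal, tR is a c-th power, and (s-t)R is a b-th power, then there exist units A,B,C ∈ Rˣ and x,y,z ∈ R with s = -A x^a, t = C z^c, s - t = B y^b, satisfying A x^a + B y^b + C z^c = 0 and x^a R + z^c R = R. -/

import Mathlib

lemma pow_ideal_unit_mul {R : Type*} [CommRing R] [IsDomain R] [IsPrincipalIdealRing R]
    {s : R} {n : ℕ} (h : ∃ J : Ideal R, Ideal.span {s} = J ^ n) :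
    ∃ (u : Rˣ) (x : R), s = (u : R) * x ^ n := by
  obtain ⟨J, hJ⟩ := h
  obtain ⟨g, hg⟩ := (IsPrincipalIdealRing.principal J).principal
  rw [hg, Ideal.submodule_span_eq, Ideal.span_singleton_pow] at hJ
  rw [Ideal.span_singleton_eq_span_singleton] at hJ
  obtain ⟨u, hu⟩ := hJ
  refine ⟨u⁻¹, g, ?_⟩
  rw [← hu]
  rw [mul_left_comm, Units.inv_mul, mul_one]

/-- Points of the Belyi stack over a PID arise from primitive solutions of generalized
Fermat equations with unit coefficients: if `(s,t)` is a unimodular pair such that `sR`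
is an `a`-th power of an ideal, `(s-t)R` a `b`-th power, and `tR` a `c`-th power, then
there are units `A, B, C` and `x, y, z ∈ R` with `s = -A xᵃ`, `t = C z^c`,
`s - t = B y^b`, so that `A xᵃ + B y^b + C z^c = 0` and `xᵃ R + z^c R = R`. -/
theorem belyi_stack_points_from_fermat (R : Type*) [CommRing R] [IsDomain R]
    [IsPrincipalIdealRing R] (a b c : ℕ) (ha : 0 < a) (hb : 0 < b) (hc : 0 < c)
    (s t : R) (hst : IsCoprime s t)
    (h0 : ∃ J : Ideal R, Ideal.span {s} = J ^ a)
    (h1 : ∃ J : Ideal R, Ideal.span {s - t} = J ^ b)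
    (hi : ∃ J : Ideal R, Ideal.span {t} = J ^ c) :
    ∃ (A B C : Rˣ) (x y z : R),
      s = -(A : R) * x ^ a ∧ t = (C : R) * z ^ c ∧ s - t = (B : R) * y ^ b ∧
      (A : R) * x ^ a + (B : R) * y ^ b + (C : R) * z ^ c = 0 ∧
      IsCoprime (x ^ a) (z ^ c) := by
  obtain ⟨u, x, hx⟩ := pow_ideal_unit_mul h0
  obtain ⟨v, y, hy⟩ := pow_ideal_unit_mul h1
  obtain ⟨w, z, hz⟩ := pow_ideal_unit_mul hi
  refine ⟨-u, v, w, x, y, z, ?_, hz, hy, ?_, ?_⟩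
  · rw [hx]; push_cast; ring
  · have : (-(u : R)) * x ^ a = -s := by rw [hx]; push_cast; ring
    push_cast
    rw [this, ← hy, ← hz]; ring
  · have h1 : IsCoprime ((u : R) * x ^ a) ((w : R) * z ^ c) := by rw [← hx, ← hz]; exact hst
    have h2 := (isCoprime_mul_unit_left_left u.isUnit _ _).mp h1
    exact (isCoprime_mul_unit_left_right w.isUnit _ _).mp h2
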